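/- Let S be the smallest set of pairs of integers that contains (2,1) and is closed under the three maps (m,n) ↦ (2m+n, m), (m,n) ↦ (2n+m, n), and (m,n) ↦ (2m-n, m). Then every pair (m,n) in S satisfies: m > n ≥ 1, m and n have opposite parity (m + n is odd), and gcd(m,n) = 1. -/

import Mathlib

theorem tree21_sound (S : Set (ℤ × ℤ))
    (hS : S = ⋂₀ {T : Set (ℤ × ℤ) | ((2 : ℤ), (1 : ℤ)) ∈ T ∧
      ∀ m n : ℤ, (m, n) ∈ T →
        (2 * m + n, m) ∈ T ∧ (2 * n + m, n) ∈ T ∧ (2 * m - n, m) ∈ T})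
    (m n : ℤ) (hmem : (m, n) ∈ S) :
    m > n ∧ n ≥ 1 ∧ Odd (m + n) ∧ Int.gcd m n = 1 := by
  subst hS
  refine hmem {p : ℤ × ℤ | p.1 > p.2 ∧ p.2 ≥ 1 ∧ Odd (p.1 + p.2) ∧ Int.gcd p.1 p.2 = 1} ?_
  constructor
  · refine ⟨by norm_num, by norm_num, ⟨1, by ring⟩, by norm_num⟩
  · rintro a b ⟨h1, h2, h3, h4⟩
    refine ⟨⟨by simp; omega, by simp; omega, ?_, ?_⟩, ⟨by simp; omega, by simp; omega, ?_, ?_⟩,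
      ⟨by simp; omega, by simp; omega, ?_, ?_⟩⟩
    · obtain ⟨k, hk⟩ := h3; exact ⟨a + k, by simp; omega⟩
    · rw [← Int.isCoprime_iff_gcd_eq_one] at h4 ⊢
      have := (h4.symm.add_mul_left_left 2)
      have e : b + a * 2 = 2 * a + b := by ring
      rwa [e] at this
    · obtain ⟨k, hk⟩ := h3; exact ⟨b + k, by simp; omega⟩
    · rw [← Int.isCoprime_iff_gcd_eq_one] at h4 ⊢
      have := (h4.add_mul_left_left 2)
      have e : a + b * 2 = 2 * b + a := by ring
      rwa [e] at this
    · obtain ⟨k, hk⟩ := h3; exact ⟨a + k - b, by simp; omega⟩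
    · rw [← Int.isCoprime_iff_gcd_eq_one] at h4 ⊢
      have := (h4.symm.neg_left.add_mul_left_left 2)
      have e : -b + a * 2 = 2 * a - b := by ring
      rwa [e] at this
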